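/- Let a > 0, a ≠ 1, and define X : ℝ² → ℝ³ by X(u,v) = ( cosh(a u)·sin(a v)/a , [−sin v·cos(a v)·sinh u·sinh(a u) + a·sin(a v)·cos v·sinh u·sinh(a u) + a·sin v·cos(a v)·cosh u·cosh(a u) − cos v·sin(a v)·cosh u·cosh(a u)]/(a²−1) + sinh u·cos v , [a·cos v·sin(a v)·cosh u·sinh(a u) − sin v·cos(a v)·cosh u·sinh(a u) + a·sin v·cos(a v)·sinh u·cosh(a u) − cos v·sin(a v)·sinh u·cosh(a u)]/(a²−1) + cos v·cosh u ). Then each coordinate function of X is harmonic on ℝ², i.e. ∂²X_k/∂u² + ∂²X_k/∂v² = 0 for k = 1,2,3. -/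

import Mathlib

open Real

/-- First coordinate of the bending helicoid with spacelike axis. -/
noncomputable def X1 (a u v : ℝ) : ℝ :=
  cosh (a*u) * sin (a*v) / a

/-- Second coordinate of the bending helicoid with spacelike axis. -/
noncomputable def X2 (a u v : ℝ) : ℝ :=
  (- sin v * cos (a*v) * sinh u * sinh (a*u)
   + a * sin (a*v) * cos v * sinh u * sinh (a*u)
   + a * sin v * cos (a*v) * cosh u * cosh (a*u)
   - cos v * sin (a*v) * cosh u * cosh (a*u)) / (a^2 - 1)
  + sinh u * cos v

/-- Third coordinate of the bending helicoid with spacelike axis. -/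
noncomputable def X3 (a u v : ℝ) : ℝ :=
  (a * cos v * sin (a*v) * cosh u * sinh (a*u)
   - sin v * cos (a*v) * cosh u * sinh (a*u)
   + a * sin v * cos (a*v) * sinh u * cosh (a*u)
   - cos v * sin (a*v) * sinh u * cosh (a*u)) / (a^2 - 1)
  + cos v * cosh u

/-- Generic linear combination of hyperbolic basis functions. -/
noncomputable def hfun (a c1 c2 c3 c4 c5 c6 c7 c8 : ℝ) : ℝ → ℝ := fun x =>
  c1*(sinh x*sinh (a*x)) + c2*(cosh x*cosh (a*x)) + c3*(cosh x*sinh (a*x))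
  + c4*(sinh x*cosh (a*x)) + c5*sinh x + c6*cosh x + c7*sinh (a*x) + c8*cosh (a*x)

/-- Generic linear combination of trigonometric basis functions. -/
noncomputable def tfun (a c1 c2 c3 c4 c5 c6 c7 c8 : ℝ) : ℝ → ℝ := fun x =>
  c1*(sin x*cos (a*x)) + c2*(cos x*sin (a*x)) + c3*(sin x*sin (a*x))
  + c4*(cos x*cos (a*x)) + c5*cos x + c6*sin x + c7*sin (a*x) + c8*cos (a*x)

lemma deriv_hfun (a c1 c2 c3 c4 c5 c6 c7 c8 : ℝ) :
    deriv (hfun a c1 c2 c3 c4 c5 c6 c7 c8)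
      = hfun a (c3+a*c4) (c4+a*c3) (c1+a*c2) (c2+a*c1) c6 c5 (a*c8) (a*c7) := by
  funext s
  have Hs : HasDerivAt (fun x : ℝ => sinh (a*x)) (a * cosh (a*s)) s := by
    simpa [mul_comm, Function.comp_def] using (Real.hasDerivAt_sinh (a*s)).comp s ((hasDerivAt_id s).const_mul a)
  have Hc : HasDerivAt (fun x : ℝ => cosh (a*x)) (a * sinh (a*s)) s := by
    simpa [mul_comm, Function.comp_def] using (Real.hasDerivAt_cosh (a*s)).comp s ((hasDerivAt_id s).const_mul a)
  have h := ((((((((((Real.hasDerivAt_sinh s).mul Hs).const_mul c1).add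
    (((Real.hasDerivAt_cosh s).mul Hc).const_mul c2)).add
    (((Real.hasDerivAt_cosh s).mul Hs).const_mul c3)).add
    (((Real.hasDerivAt_sinh s).mul Hc).const_mul c4)).add
    ((Real.hasDerivAt_sinh s).const_mul c5)).add
    ((Real.hasDerivAt_cosh s).const_mul c6)).add
    (Hs.const_mul c7)).add (Hc.const_mul c8))
  have h2 : HasDerivAt (hfun a c1 c2 c3 c4 c5 c6 c7 c8) _ s := h
  rw [h2.deriv]; unfold hfun; ring

lemma deriv_tfun (a c1 c2 c3 c4 c5 c6 c7 c8 : ℝ) :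
    deriv (tfun a c1 c2 c3 c4 c5 c6 c7 c8)
      = tfun a (a*c3-c4) (c3-a*c4) (-(a*c1)-c2) (c1+a*c2) c6 (-c5) (-(a*c8)) (a*c7) := by
  funext s
  have Hs : HasDerivAt (fun x : ℝ => sin (a*x)) (a * cos (a*s)) s := by
    simpa [mul_comm, Function.comp_def] using (Real.hasDerivAt_sin (a*s)).comp s ((hasDerivAt_id s).const_mul a)
  have Hc : HasDerivAt (fun x : ℝ => cos (a*x)) (-(a * sin (a*s))) s := by
    simpa [mul_comm, Function.comp_def] using (Real.hasDerivAt_cos (a*s)).comp s ((hasDerivAt_id s).const_mul a)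
  have h := ((((((((((Real.hasDerivAt_sin s).mul Hc).const_mul c1).add
    (((Real.hasDerivAt_cos s).mul Hs).const_mul c2)).add
    (((Real.hasDerivAt_sin s).mul Hs).const_mul c3)).add
    (((Real.hasDerivAt_cos s).mul Hc).const_mul c4)).add
    ((Real.hasDerivAt_cos s).const_mul c5)).add
    ((Real.hasDerivAt_sin s).const_mul c6)).add
    (Hs.const_mul c7)).add (Hc.const_mul c8))
  have h2 : HasDerivAt (tfun a c1 c2 c3 c4 c5 c6 c7 c8) _ s := h
  rw [h2.deriv]; unfold tfun; ring

/-- Each coordinate function of the bending helicoid with spacelike axis is harmonic. -/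
theorem bending_helicoid_spacelike_harmonic (a : ℝ) (ha : 0 < a) (ha1 : a ≠ 1) (u v : ℝ) :
    deriv (deriv (fun s => X1 a s v)) u + deriv (deriv (fun t => X1 a u t)) v = 0 ∧
    deriv (deriv (fun s => X2 a s v)) u + deriv (deriv (fun t => X2 a u t)) v = 0 ∧
    deriv (deriv (fun s => X3 a s v)) u + deriv (deriv (fun t => X3 a u t)) v = 0 := by
  have ha0 : a ≠ 0 := ne_of_gt ha
  have hΔ : a^2 - 1 ≠ 0 := by
    intro h
    have : (a - 1) * (a + 1) = 0 := by ring_nf; linarith [h]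
    rcases mul_eq_zero.1 this with h' | h'
    · exact ha1 (by linarith)
    · linarith
  refine ⟨?_, ?_, ?_⟩
  · -- X1
    have eu : (fun s => X1 a s v) = hfun a 0 0 0 0 0 0 0 (sin (a*v)/a) := by
      funext s; simp only [X1, hfun]; ring
    have ev : (fun t => X1 a u t) = tfun a 0 0 0 0 0 0 (cosh (a*u)/a) 0 := by
      funext t; simp only [X1, tfun]; ring
    rw [eu, ev, deriv_hfun, deriv_hfun, deriv_tfun, deriv_tfun]
    simp only [hfun, tfun]
    field_simp
    ring
  · -- X2
    have eu : (fun s => X2 a s v) = hfun a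
        ((- sin v * cos (a*v) + a * sin (a*v) * cos v)/(a^2-1))
        ((a * sin v * cos (a*v) - cos v * sin (a*v))/(a^2-1))
        0 0 (cos v) 0 0 0 := by
      funext s; simp only [X2, hfun]; ring
    have ev : (fun t => X2 a u t) = tfun a
        ((- sinh u * sinh (a*u) + a * cosh u * cosh (a*u))/(a^2-1))
        ((a * sinh u * sinh (a*u) - cosh u * cosh (a*u))/(a^2-1))
        0 0 (sinh u) 0 0 0 := by
      funext t; simp only [X2, tfun]; ring
    rw [eu, ev, deriv_hfun, deriv_hfun, deriv_tfun, deriv_tfun]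
    simp only [hfun, tfun]
    field_simp
    ring
  · -- X3
    have eu : (fun s => X3 a s v) = hfun a 0 0
        ((a * cos v * sin (a*v) - sin v * cos (a*v))/(a^2-1))
        ((a * sin v * cos (a*v) - cos v * sin (a*v))/(a^2-1))
        0 (cos v) 0 0 := by
      funext s; simp only [X3, hfun]; ring
    have ev : (fun t => X3 a u t) = tfun a
        ((- cosh u * sinh (a*u) + a * sinh u * cosh (a*u))/(a^2-1))
        ((a * cosh u * sinh (a*u) - sinh u * cosh (a*u))/(a^2-1))
        0 0 (cosh u) 0 0 0 := by
      funext t; simp only [X3, tfun]; ring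
    rw [eu, ev, deriv_hfun, deriv_hfun, deriv_tfun, deriv_tfun]
    simp only [hfun, tfun]
    field_simp
    ring
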